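/- Let E be a real inner product space, n ≥ 1, β > 0, and let z_1, …, z_n ∈ E be unit vectors with labels y_1, …, y_n. Suppose classes are balanced in the sense that every sample has exactly N ≥ 1 negatives: for all i, the set {j : y_j ≠ y_i} has cardinality N. Then (1/(βn)) ∑_{i=1}^n log(1 + ∑_{j : y_j ≠ y_i} exp(β(⟪z_i, z_j⟫ − 1))) ≥ (1/β)·log N − (1/(2nN)) ∑_{i=1}^n ∑_{j : y_j ≠ y_i} ‖z_i − z_j‖². (This shows the contrastive part of the Multi-Similarity loss is an upper bound, up to constants, on the common contrastive term C = −(1/n)∑_i ∑_{j:y_j≠y_i} ‖z_i − z_j‖².) -/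

import Mathlib

open scoped RealInnerProductSpace
open Finset Real

lemma key_log_sum_exp {ι : Type*} (s : Finset ι) (a : ι → ℝ) (N : ℕ) (hN : 1 ≤ N)
    (hs : s.card = N) :
    Real.log N + (∑ j ∈ s, a j) / N ≤ Real.log (1 + ∑ j ∈ s, Real.exp (a j)) := by
  have hNpos : (0:ℝ) < N := by exact_mod_cast hN
  set m : ℝ := (∑ j ∈ s, a j) / N with hm
  have hsum : ∑ j ∈ s, a j = N * m := by
    rw [hm, mul_div_assoc']; exact (mul_div_cancel_left₀ _ (ne_of_gt hNpos)).symm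
  have h1 : (N:ℝ) * Real.exp m ≤ ∑ j ∈ s, Real.exp (a j) := by
    have hje : ∀ j ∈ s, Real.exp m * (1 + (a j - m)) ≤ Real.exp (a j) := by
      intro j _
      have h := Real.add_one_le_exp (a j - m)
      calc Real.exp m * (1 + (a j - m)) ≤ Real.exp m * Real.exp (a j - m) := by
            nlinarith [Real.exp_pos m]
        _ = Real.exp (a j) := by rw [← Real.exp_add]; ring_nf
    have heq : ∑ j ∈ s, Real.exp m * (1 + (a j - m)) = (N:ℝ) * Real.exp m := by
      rw [← Finset.mul_sum]
      have h2 : ∑ j ∈ s, (1 + (a j - m)) = (N:ℝ) := by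
        rw [Finset.sum_add_distrib, Finset.sum_sub_distrib, hsum]
        simp [hs]
      rw [h2]; ring
    calc (N:ℝ) * Real.exp m = ∑ j ∈ s, Real.exp m * (1 + (a j - m)) := heq.symm
      _ ≤ ∑ j ∈ s, Real.exp (a j) := Finset.sum_le_sum hje
  have hpos : (0:ℝ) < (N:ℝ) * Real.exp m := by positivity
  calc Real.log N + m = Real.log ((N:ℝ) * Real.exp m) := by
        rw [Real.log_mul (ne_of_gt hNpos) (Real.exp_ne_zero m), Real.log_exp]
    _ ≤ Real.log (1 + ∑ j ∈ s, Real.exp (a j)) := by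
        apply Real.log_le_log hpos; linarith

/-- The contrastive part of the Multi-Similarity loss is an upper bound, up to
constants, on the common contrastive term `C = -(1/n) ∑ i ∑ (j : y j ≠ y i), ‖z i - z j‖²`:
if every sample has exactly `N ≥ 1` negatives, then
`(1/(βn)) ∑ i, log (1 + ∑ (j : y j ≠ y i), exp (β (⟪z i, z j⟫ - 1)))
  ≥ (1/β) * log N - (1/(2nN)) ∑ i ∑ (j : y j ≠ y i), ‖z i - z j‖²`. -/
theorem ms_contrastive_ge
    {E : Type*} [NormedAddCommGroup E] [InnerProductSpace ℝ E]
    {L : Type*} [DecidableEq L]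
    (n : ℕ) (hn : 1 ≤ n) (β : ℝ) (hβ : 0 < β)
    (z : Fin n → E) (hz : ∀ i, ‖z i‖ = 1)
    (y : Fin n → L)
    (N : ℕ) (hN : 1 ≤ N)
    (hbal : ∀ i, (univ.filter (fun j => y j ≠ y i)).card = N) :
    (1 / (β * (n : ℝ))) *
        ∑ i, Real.log (1 + ∑ j ∈ univ.filter (fun j => y j ≠ y i),
          Real.exp (β * (⟪z i, z j⟫ - 1)))
      ≥ (1 / β) * Real.log (N : ℝ)
        - (1 / (2 * (n : ℝ) * (N : ℝ))) *
            ∑ i, ∑ j ∈ univ.filter (fun j => y j ≠ y i), ‖z i - z j‖ ^ 2 := by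
  have hnpos : (0:ℝ) < n := by exact_mod_cast hn
  have hNpos : (0:ℝ) < N := by exact_mod_cast hN
  -- inner product in terms of norm
  have hinner : ∀ i j : Fin n, ⟪z i, z j⟫ - 1 = -(‖z i - z j‖ ^ 2) / 2 := by
    intro i j
    have h := norm_sub_sq_real (z i) (z j)
    rw [hz i, hz j] at h
    nlinarith [h]
  -- pointwise bound
  have hpt : ∀ i : Fin n,
      Real.log N + (∑ j ∈ univ.filter (fun j => y j ≠ y i),
        β * (⟪z i, z j⟫ - 1)) / N
      ≤ Real.log (1 + ∑ j ∈ univ.filter (fun j => y j ≠ y i),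
        Real.exp (β * (⟪z i, z j⟫ - 1))) := fun i =>
    key_log_sum_exp _ _ N hN (hbal i)
  have hsum : (n:ℝ) * Real.log N + ∑ i, (∑ j ∈ univ.filter (fun j => y j ≠ y i),
        β * (⟪z i, z j⟫ - 1)) / N
      ≤ ∑ i, Real.log (1 + ∑ j ∈ univ.filter (fun j => y j ≠ y i),
        Real.exp (β * (⟪z i, z j⟫ - 1))) := by
    have h := Finset.sum_le_sum (s := (univ : Finset (Fin n))) (fun i _ => hpt i)
    simpa [Finset.sum_add_distrib, Finset.card_univ, mul_comm] using h
  -- rewrite inner sums using hinner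
  have hrw : ∀ i : Fin n, ∑ j ∈ univ.filter (fun j => y j ≠ y i),
      β * (⟪z i, z j⟫ - 1)
      = -(β/2) * ∑ j ∈ univ.filter (fun j => y j ≠ y i), ‖z i - z j‖ ^ 2 := by
    intro i
    rw [Finset.mul_sum]
    apply Finset.sum_congr rfl
    intro j _
    rw [hinner i j]; ring
  rw [ge_iff_le]
  have hsum2 : (n:ℝ) * Real.log N
      - (β/(2*N)) * ∑ i, ∑ j ∈ univ.filter (fun j => y j ≠ y i), ‖z i - z j‖ ^ 2
      ≤ ∑ i, Real.log (1 + ∑ j ∈ univ.filter (fun j => y j ≠ y i),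
        Real.exp (β * (⟪z i, z j⟫ - 1))) := by
    have heq : ∑ i, (∑ j ∈ univ.filter (fun j => y j ≠ y i),
        β * (⟪z i, z j⟫ - 1)) / N
        = ∑ i, (-(β/(2*(N:ℝ))) * ∑ j ∈ univ.filter (fun j => y j ≠ y i),
            ‖z i - z j‖ ^ 2) := by
      apply Finset.sum_congr rfl
      intro i _
      rw [hrw i]
      field_simp
    rw [heq, ← Finset.mul_sum] at hsum
    linarith [hsum]
  have hc : (0:ℝ) < β * n := by positivity
  have hpos : (0:ℝ) < 1/(β*n) := by positivity
  have h2 := mul_le_mul_of_nonneg_left hsum2 (le_of_lt hpos)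
  refine le_trans (le_of_eq ?_) h2
  have hβ' : β ≠ 0 := ne_of_gt hβ
  have hn' : (n:ℝ) ≠ 0 := ne_of_gt hnpos
  have hN' : (N:ℝ) ≠ 0 := ne_of_gt hNpos
  field_simp
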